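/- arXiv:2402.16676 — 6 statements merged into one kernel-verified Lean document; each statement's English description precedes it below -/
import Mathlib

section
/- Let A be a bialgebra over a field k and ξ : A → A an algebra endomorphism. Define B_ξ = { x ∈ A | (ξ⊗id)(Δ(x)) = Δ(x) }. Then B_ξ is a right coideal subalgebra of A (i.e. a subalgebra with Δ(B_ξ) ⊆ B_ξ ⊗ A), B_ξ is contained in the fixed-point subalgebra A^ξ = { x ∈ A | ξ(x) = x }, and every right coideal subalgebra C of A with C ⊆ A^ξ satisfies C ⊆ B_ξ. In other words, B_ξ is the maximal right coideal subalgebra of A contained in A^ξ. -/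
open TensorProduct

section Defs
variable (k A : Type*) [CommSemiring k] [Semiring A]

section Alg
variable [Algebra k A]

noncomputable def emb12 : A ⊗[k] A →ₐ[k] A ⊗[k] (A ⊗[k] A) :=
  Algebra.TensorProduct.map (AlgHom.id k A) Algebra.TensorProduct.includeLeft

noncomputable def emb13 : A ⊗[k] A →ₐ[k] A ⊗[k] (A ⊗[k] A) :=
  Algebra.TensorProduct.map (AlgHom.id k A) Algebra.TensorProduct.includeRight

noncomputable def emb23 : A ⊗[k] A →ₐ[k] A ⊗[k] (A ⊗[k] A) :=
  Algebra.TensorProduct.includeRight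

noncomputable def flip2 : A ⊗[k] A ≃ₐ[k] A ⊗[k] A := Algebra.TensorProduct.comm k A A

noncomputable def psiL (ψ : A ≃ₐ[k] A) : A ⊗[k] A →ₐ[k] A ⊗[k] A :=
  Algebra.TensorProduct.map ψ.toAlgHom (AlgHom.id k A)

noncomputable def psiR (ψ : A ≃ₐ[k] A) : A ⊗[k] A →ₐ[k] A ⊗[k] A :=
  Algebra.TensorProduct.map (AlgHom.id k A) ψ.toAlgHom

noncomputable def psiBoth (ψ : A ≃ₐ[k] A) : A ⊗[k] A →ₐ[k] A ⊗[k] A :=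
  Algebra.TensorProduct.map ψ.toAlgHom ψ.toAlgHom

noncomputable def sub2 (B : Subalgebra k A) : Submodule k (A ⊗[k] A) :=
  Submodule.span k {t : A ⊗[k] A | ∃ x ∈ B, ∃ y : A, t = x ⊗ₜ[k] y}

end Alg

variable [Bialgebra k A]

noncomputable def cop : A →ₐ[k] A ⊗[k] A := Bialgebra.comulAlgHom k A

noncomputable def copOp : A →ₐ[k] A ⊗[k] A := (flip2 k A).toAlgHom.comp (cop k A)

noncomputable def cou : A →ₐ[k] k := Bialgebra.counitAlgHom k A

noncomputable def copL : A ⊗[k] A →ₐ[k] A ⊗[k] (A ⊗[k] A) :=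
  (Algebra.TensorProduct.assoc k k k A A A).toAlgHom.comp
    (Algebra.TensorProduct.map (cop k A) (AlgHom.id k A))

noncomputable def copR : A ⊗[k] A →ₐ[k] A ⊗[k] (A ⊗[k] A) :=
  Algebra.TensorProduct.map (AlgHom.id k A) (cop k A)

noncomputable def couL : A ⊗[k] A →ₐ[k] A :=
  (Algebra.TensorProduct.lid k A).toAlgHom.comp
    (Algebra.TensorProduct.map (cou k A) (AlgHom.id k A))

noncomputable def couR : A ⊗[k] A →ₐ[k] A :=
  (Algebra.TensorProduct.rid k k A).toAlgHom.comp
    (Algebra.TensorProduct.map (AlgHom.id k A) (cou k A))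

structure QTriangular (R : A ⊗[k] A) : Prop where
  isUnit : IsUnit R
  intertwine : ∀ x : A, R * cop k A x = copOp k A x * R
  coproduct_left : copL k A R = emb13 k A R * emb23 k A R
  coproduct_right : copR k A R = emb13 k A R * emb12 k A R

end Defs

section Bxi
variable (k A : Type*) [CommSemiring k] [Semiring A] [Bialgebra k A]

/-- `B_ξ = { x ∈ A | (ξ ⊗ id)(Δ(x)) = Δ(x) }` -/
noncomputable def Bxi (ξ : A →ₐ[k] A) : Set A :=
  {x : A | Algebra.TensorProduct.map ξ (AlgHom.id k A) (cop k A x) = cop k A x}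

/-- the subspace `S ⊗ A ⊆ A ⊗ A` spanned by tensors with first leg in a subset `S` -/
noncomputable def setSub2 (S : Set A) : Submodule k (A ⊗[k] A) :=
  Submodule.span k {t : A ⊗[k] A | ∃ x ∈ S, ∃ y : A, t = x ⊗ₜ[k] y}

end Bxi

section AuxB
variable {k A : Type*} [Field k] [Ring A] [Bialgebra k A]

lemma cop_eq_comul (x : A) : cop k A x = Coalgebra.comul x := rfl

lemma algMap_eq_rTensor (ξ : A →ₐ[k] A) (t : A ⊗[k] A) :
    Algebra.TensorProduct.map ξ (AlgHom.id k A) t = ξ.toLinearMap.rTensor A t := by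
  induction t using TensorProduct.induction_on with
  | zero => simp
  | tmul x y => simp
  | add x y hx hy => simp [map_add, hx, hy]

variable {ι : Type*} [DecidableEq ι] (b : Module.Basis ι k A)

noncomputable def eEquiv : A ⊗[k] A ≃ₗ[k] ι →₀ A :=
  (LinearEquiv.lTensor A b.repr).trans (TensorProduct.finsuppScalarRight k k A ι)

lemma eEquiv_tmul_basis (m : A) (i : ι) :
    eEquiv b (m ⊗ₜ[k] b i) = Finsupp.single i m := by
  simp only [eEquiv, LinearEquiv.trans_apply, LinearEquiv.lTensor_tmul, Module.Basis.repr_self]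
  rw [TensorProduct.finsuppScalarRight_apply_tmul, Finsupp.sum_single_index] <;> simp

lemma eEquiv_tmul_apply (m y : A) (i : ι) :
    eEquiv b (m ⊗ₜ[k] y) i = b.repr y i • m := by
  simp [eEquiv]

lemma eEquiv_decomp (t : A ⊗[k] A) :
    t = ∑ i ∈ (eEquiv b t).support, (eEquiv b t i) ⊗ₜ[k] b i := by
  apply (eEquiv b).injective
  rw [map_sum]
  rw [Finset.sum_congr rfl fun i _ => eEquiv_tmul_basis b (eEquiv b t i) i]
  exact (Finsupp.sum_single (eEquiv b t)).symm

/-- The map `A ⊗ A ⊗ A → A ⊗ A` extracting the `i`-th basis coefficient in the last leg. -/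
noncomputable def Ci (i : ι) : (A ⊗[k] A) ⊗[k] A →ₗ[k] A ⊗[k] A :=
  (TensorProduct.rid k (A ⊗[k] A)).toLinearMap ∘ₗ
    LinearMap.lTensor (A ⊗[k] A) (b.coord i)

lemma Ci_tmul (i : ι) (u : A ⊗[k] A) (z : A) :
    Ci b i (u ⊗ₜ[k] z) = b.repr z i • u := by
  simp [Ci, Module.Basis.coord_apply]

open Coalgebra in
lemma Ci_rTensor_comul (i : ι) (t : A ⊗[k] A) :
    Ci b i ((comul (R := k) (A := A)).rTensor A t) = comul (eEquiv b t i) := by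
  induction t using TensorProduct.induction_on with
  | zero => simp
  | tmul x y => rw [LinearMap.rTensor_tmul, Ci_tmul, eEquiv_tmul_apply, map_smul]
  | add s t hs ht =>
      rw [map_add, map_add, hs, ht, ← map_add]
      congr 1
      rw [map_add, Finsupp.add_apply]

lemma Ci_rTensor_rTensor (ξ : A →ₐ[k] A) (i : ι) (s : (A ⊗[k] A) ⊗[k] A) :
    Ci b i ((ξ.toLinearMap.rTensor A).rTensor A s) = ξ.toLinearMap.rTensor A (Ci b i s) := by
  induction s using TensorProduct.induction_on with
  | zero => simp
  | tmul u z => rw [LinearMap.rTensor_tmul, Ci_tmul, Ci_tmul, map_smul]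
  | add s t hs ht => rw [map_add, map_add, hs, ht, map_add, map_add]

open Coalgebra in
lemma stepA (ξ : A →ₐ[k] A) (x : A)
    (h : ξ.toLinearMap.rTensor A (comul (R := k) x) = comul x) :
    (ξ.toLinearMap.rTensor A).rTensor A ((comul (R := k) (A := A)).rTensor A (comul x)) =
      (comul (R := k) (A := A)).rTensor A (comul x) := by
  apply (TensorProduct.assoc k A A A).injective
  have hassoc : ∀ s : (A ⊗[k] A) ⊗[k] A,
      TensorProduct.assoc k A A A ((ξ.toLinearMap.rTensor A).rTensor A s) =
        ξ.toLinearMap.rTensor (A ⊗[k] A) (TensorProduct.assoc k A A A s) := by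
    intro s
    have := TensorProduct.ext_threefold (R := k)
      (g := (TensorProduct.assoc k A A A).toLinearMap ∘ₗ (ξ.toLinearMap.rTensor A).rTensor A)
      (h := ξ.toLinearMap.rTensor (A ⊗[k] A) ∘ₗ (TensorProduct.assoc k A A A).toLinearMap)
      (fun x y z => by simp)
    exact LinearMap.congr_fun this s
  rw [hassoc, Coalgebra.coassoc_apply]
  have hswap : ∀ t : A ⊗[k] A,
      ξ.toLinearMap.rTensor (A ⊗[k] A) ((comul (R := k) (A := A)).lTensor A t) =
        (comul (R := k) (A := A)).lTensor A (ξ.toLinearMap.rTensor A t) := by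
    intro t
    induction t using TensorProduct.induction_on with
    | zero => simp
    | tmul x y => simp
    | add s t hs ht => rw [map_add, map_add, hs, ht, map_add, map_add]
  rw [hswap, h, ← Coalgebra.coassoc_apply]

end AuxB

/-- For a bialgebra `A` and an algebra endomorphism `ξ` of `A`, the set
`B_ξ = { x | (ξ⊗id)(Δ(x)) = Δ(x) }` is a right coideal subalgebra of `A` contained in the
fixed-point subalgebra `A^ξ`, and it contains every right coideal subalgebra of `A`
contained in `A^ξ`; i.e. `B_ξ` is the maximal such subalgebra. -/
theorem Bxi_maximal_coideal_subalgebra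
    {k A : Type*} [Field k] [Ring A] [Bialgebra k A] (ξ : A →ₐ[k] A) :
    -- B_ξ is a subalgebra
    ((1 : A) ∈ Bxi k A ξ) ∧
    (∀ x ∈ Bxi k A ξ, ∀ y ∈ Bxi k A ξ, x * y ∈ Bxi k A ξ) ∧
    (∀ x ∈ Bxi k A ξ, ∀ y ∈ Bxi k A ξ, x + y ∈ Bxi k A ξ) ∧
    (∀ c : k, ∀ x ∈ Bxi k A ξ, c • x ∈ Bxi k A ξ) ∧
    -- B_ξ is a right coideal: Δ(B_ξ) ⊆ B_ξ ⊗ A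
    (∀ x ∈ Bxi k A ξ, cop k A x ∈ setSub2 k A (Bxi k A ξ)) ∧
    -- B_ξ ⊆ A^ξ
    (∀ x ∈ Bxi k A ξ, ξ x = x) ∧
    -- maximality: every right coideal subalgebra contained in A^ξ lies in B_ξ
    (∀ C : Subalgebra k A,
      (∀ c ∈ C, cop k A c ∈ setSub2 k A (C : Set A)) →
      (∀ c ∈ C, ξ c = c) →
      ∀ c ∈ C, c ∈ Bxi k A ξ) := by
  classical
  have memBxi : ∀ x : A, x ∈ Bxi k A ξ ↔
      ξ.toLinearMap.rTensor A (Coalgebra.comul x) = Coalgebra.comul x := by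
    intro x
    rw [Bxi, Set.mem_setOf_eq, algMap_eq_rTensor, cop_eq_comul]
  refine ⟨?_, ?_, ?_, ?_, ?_, ?_, ?_⟩
  · show Algebra.TensorProduct.map ξ (AlgHom.id k A) (cop k A 1) = cop k A 1
    simp
  · intro x hx y hy
    show Algebra.TensorProduct.map ξ (AlgHom.id k A) (cop k A (x * y)) = cop k A (x * y)
    rw [map_mul, map_mul, hx, hy]
  · intro x hx y hy
    show Algebra.TensorProduct.map ξ (AlgHom.id k A) (cop k A (x + y)) = cop k A (x + y)
    rw [map_add, map_add, hx, hy]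
  · intro c x hx
    show Algebra.TensorProduct.map ξ (AlgHom.id k A) (cop k A (c • x)) = cop k A (c • x)
    rw [map_smul, map_smul, hx]
  · intro x hx
    have hx' : ξ.toLinearMap.rTensor A (Coalgebra.comul x) = Coalgebra.comul x :=
      (memBxi x).mp hx
    let b : Module.Basis _ k A := Module.Basis.ofVectorSpace k A
    have hdec := eEquiv_decomp b (Coalgebra.comul (R := k) x)
    rw [cop_eq_comul, hdec]
    apply Submodule.sum_mem
    intro i _
    apply Submodule.subset_span
    refine ⟨eEquiv b (Coalgebra.comul (R := k) x) i, ?_, b i, rfl⟩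
    rw [memBxi]
    rw [← Ci_rTensor_comul b i, ← Ci_rTensor_rTensor b ξ i, stepA ξ x hx',
      Ci_rTensor_comul b i]
  · intro x hx
    have hx' : ξ.toLinearMap.rTensor A (Coalgebra.comul x) = Coalgebra.comul x :=
      (memBxi x).mp hx
    have h1 := congrArg (LinearMap.lTensor A (Coalgebra.counit (R := k) (A := A))) hx'
    have hswap : ∀ t : A ⊗[k] A,
        LinearMap.lTensor A (Coalgebra.counit (R := k) (A := A))
          (ξ.toLinearMap.rTensor A t) =
          ξ.toLinearMap.rTensor k
            (LinearMap.lTensor A (Coalgebra.counit (R := k) (A := A)) t) := by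
      intro t
      induction t using TensorProduct.induction_on with
      | zero => simp
      | tmul x y => simp
      | add s t hs ht => rw [map_add, map_add, hs, ht, map_add, map_add]
    rw [hswap] at h1
    have h2 : LinearMap.lTensor A (Coalgebra.counit (R := k) (A := A))
        (Coalgebra.comul x) = x ⊗ₜ[k] 1 := Coalgebra.lTensor_counit_comul x
    rw [h2] at h1
    have h3 : (ξ x : A) ⊗ₜ[k] (1 : k) = x ⊗ₜ[k] (1 : k) := by
      simpa using h1
    have := congrArg (TensorProduct.rid k A) h3
    simpa using this
  · intro C hco hfix c hc
    show Algebra.TensorProduct.map ξ (AlgHom.id k A) (cop k A c) = cop k A c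
    have key : ∀ t ∈ setSub2 k A (C : Set A),
        Algebra.TensorProduct.map ξ (AlgHom.id k A) t = t := by
      intro t ht
      induction ht using Submodule.span_induction with
      | mem t ht =>
          obtain ⟨x, hxC, y, rfl⟩ := ht
          rw [Algebra.TensorProduct.map_tmul]
          simp [hfix x hxC]
      | zero => simp
      | add u v _ _ hu hv => rw [map_add, hu, hv]
      | smul a u _ hu => rw [map_smul, hu]
    exact key _ (hco c hc)
end

section
/- Let H be a Hopf algebra over a field k that is generated as an algebra by primitive elements. Then every coideal subalgebra H' of H (i.e. a subalgebra with Δ(H') ⊆ H' ⊗ H) is a Hopf subalgebra of H; in particular it is closed under the antipode S. -/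
open TensorProduct

section Prim
variable (k A : Type*) [CommSemiring k] [Semiring A] [Bialgebra k A]

/-- primitive elements: `Δ(x) = x ⊗ 1 + 1 ⊗ x` -/
noncomputable def IsPrim (x : A) : Prop :=
  cop k A x = x ⊗ₜ[k] (1 : A) + (1 : A) ⊗ₜ[k] x

/-- the subspace `S ⊗ S ⊆ A ⊗ A` spanned by tensors with both legs in a subset `S` -/
noncomputable def setSub22 (S : Set A) : Submodule k (A ⊗[k] A) :=
  Submodule.span k {t : A ⊗[k] A | ∃ x ∈ S, ∃ y ∈ S, t = x ⊗ₜ[k] y}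

end Prim


section AuxLinear
open LinearMap Submodule

variable {k : Type*} [Field k] {M N : Type*} [AddCommGroup M] [AddCommGroup N]
  [Module k M] [Module k N]

/-- first-leg subspace -/
noncomputable def legL (P : Submodule k M) : Submodule k (M ⊗[k] N) :=
  span k {t | ∃ p ∈ P, ∃ h : N, t = p ⊗ₜ[k] h}

/-- second-leg subspace -/
noncomputable def legR (Q : Submodule k N) : Submodule k (M ⊗[k] N) :=
  span k {t | ∃ h : M, ∃ q ∈ Q, t = h ⊗ₜ[k] q}

lemma legL_mono {P P' : Submodule k M} (h : P ≤ P') : (legL (N := N) P) ≤ legL P' :=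
  span_mono (fun t ⟨p, hp, y, hy⟩ => ⟨p, h hp, y, hy⟩)

lemma rTensor_mem_legL {M' : Type*} [AddCommGroup M'] [Module k M'] {P : Submodule k M}
    (g : M' →ₗ[k] M) (hg : ∀ a, g a ∈ P) (u : M' ⊗[k] N) :
    g.rTensor N u ∈ legL P := by
  induction u using TensorProduct.induction_on with
  | zero => simp
  | tmul a b => exact subset_span ⟨g a, hg a, b, by simp⟩
  | add x y hx hy => rw [map_add]; exact add_mem hx hy

lemma map_mem_span2 {M' N' : Type*} [AddCommGroup M'] [Module k M'] [AddCommGroup N']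
    [Module k N'] {Sg : Set M} {Sh : Set N} (g : M' →ₗ[k] M) (h : N' →ₗ[k] N)
    (hg : ∀ a, g a ∈ Sg) (hh : ∀ b, h b ∈ Sh) (u : M' ⊗[k] N') :
    TensorProduct.map g h u ∈ span k {t : M ⊗[k] N | ∃ x ∈ Sg, ∃ y ∈ Sh, t = x ⊗ₜ[k] y} := by
  induction u using TensorProduct.induction_on with
  | zero => simp
  | tmul a b => exact subset_span ⟨g a, hg a, h b, hh b, by simp⟩
  | add x y hx hy => rw [map_add]; exact add_mem hx hy

lemma legL_eq_range (P : Submodule k M) :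
    legL (N := N) P = range (P.subtype.rTensor N) := by
  refine le_antisymm (span_le.2 ?_) ?_
  · rintro t ⟨p, hp, y, rfl⟩
    exact ⟨(⟨p, hp⟩ : P) ⊗ₜ[k] y, by simp⟩
  · rintro t ⟨s, rfl⟩
    exact rTensor_mem_legL P.subtype (fun a => a.2) s

lemma lTensor_mem_legR {N' : Type*} [AddCommGroup N'] [Module k N'] {Q : Submodule k N}
    (g : N' →ₗ[k] N) (hg : ∀ a, g a ∈ Q) (u : M ⊗[k] N') :
    g.lTensor M u ∈ legR Q := by
  induction u using TensorProduct.induction_on with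
  | zero => simp
  | tmul a b => exact subset_span ⟨a, g b, hg b, by simp⟩
  | add x y hx hy => rw [map_add]; exact add_mem hx hy

lemma legR_eq_range (Q : Submodule k N) :
    legR (M := M) Q = range (Q.subtype.lTensor M) := by
  refine le_antisymm (span_le.2 ?_) ?_
  · rintro t ⟨x, q, hq, rfl⟩
    exact ⟨x ⊗ₜ[k] (⟨q, hq⟩ : Q), by simp⟩
  · rintro t ⟨s, rfl⟩
    exact lTensor_mem_legR Q.subtype (fun a => a.2) s

lemma legL_eq_ker (P : Submodule k M) :
    legL (N := N) P = ker (P.mkQ.rTensor N) := by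
  rw [legL_eq_range, rTensor_mkQ]

lemma legR_eq_ker (Q : Submodule k N) :
    legR (M := M) Q = ker (Q.mkQ.lTensor M) := by
  rw [legR_eq_range, lTensor_mkQ]

lemma ker_rTensor_eq (f : M →ₗ[k] N) (Q : Type*) [AddCommGroup Q] [Module k Q] :
    ker (f.rTensor Q) = range ((ker f).subtype.rTensor Q) := by
  have h1 : Function.Exact ((ker f).subtype) f.rangeRestrict := by
    rw [LinearMap.exact_iff, LinearMap.ker_rangeRestrict, Submodule.range_subtype]
  have h2 := rTensor_exact (R := k) Q h1 f.surjective_rangeRestrict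
  have h3 : ker (f.rangeRestrict.rTensor Q) = range ((ker f).subtype.rTensor Q) :=
    h2.linearMap_ker_eq
  rw [← h3]
  have h4 : f = (range f).subtype.comp f.rangeRestrict := by ext x; rfl
  conv_lhs => rw [h4]
  rw [rTensor_comp, ker_comp]
  have h5 : ker ((range f).subtype.rTensor Q) = ⊥ :=
    ker_eq_bot.2 (Module.Flat.rTensor_preserves_injective_linearMap _ (range f).injective_subtype)
  rw [h5]
  rfl

lemma legL_inf_legL (P P' : Submodule k M) :
    legL (N := N) P ⊓ legL P' ≤ legL (P ⊓ P') := by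
  rintro t ⟨h1, h2⟩
  rw [legL_eq_range] at h1
  obtain ⟨s, rfl⟩ := h1
  rw [legL_eq_ker] at h2
  have h3 : ((P'.mkQ.comp P.subtype).rTensor N) s = 0 := by
    rw [rTensor_comp]; exact h2
  have h4 : s ∈ ker ((P'.mkQ.comp P.subtype).rTensor N) := h3
  rw [ker_rTensor_eq] at h4
  obtain ⟨u, rfl⟩ := h4
  rw [← LinearMap.comp_apply, ← rTensor_comp]
  refine rTensor_mem_legL _ ?_ u
  rintro ⟨⟨a, haP⟩, ha⟩
  refine ⟨haP, ?_⟩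
  simpa [Submodule.Quotient.mk_eq_zero] using ha

lemma legL_inf_legR (P : Submodule k M) (Q : Submodule k N) :
    legL P ⊓ legR Q ≤
      span k {t : M ⊗[k] N | ∃ p ∈ (P : Set M), ∃ q ∈ (Q : Set N), t = p ⊗ₜ[k] q} := by
  rintro t ⟨h1, h2⟩
  rw [legL_eq_range] at h1
  obtain ⟨s, rfl⟩ := h1
  rw [legR_eq_ker] at h2
  have hc : (Q.mkQ.lTensor M) ((P.subtype.rTensor N) s) =
      (P.subtype.rTensor (N ⧸ Q)) ((Q.mkQ.lTensor P) s) := by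
    rw [← LinearMap.comp_apply, ← LinearMap.comp_apply, lTensor_comp_rTensor,
      rTensor_comp_lTensor]
  have hinj : Function.Injective (P.subtype.rTensor (N ⧸ Q)) :=
    Module.Flat.rTensor_preserves_injective_linearMap _ P.injective_subtype
  have h0 : (Q.mkQ.lTensor P) s = 0 := by
    apply hinj; rw [← hc, h2]; simp
  have h4 : s ∈ ker (Q.mkQ.lTensor P) := h0
  rw [lTensor_mkQ] at h4
  obtain ⟨u, rfl⟩ := h4
  have : (P.subtype.rTensor N) ((Q.subtype.lTensor P) u) =
      TensorProduct.map P.subtype Q.subtype u := by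
    rw [← LinearMap.comp_apply, rTensor_comp_lTensor]
  rw [this]
  exact map_mem_span2 _ _ (fun a => a.2) (fun b => b.2) u

end AuxLinear

section AuxFil
open LinearMap Submodule

variable (k H : Type*) [Field k] [Ring H] [Bialgebra k H]

noncomputable def Pprim : Submodule k H := Submodule.span k {x : H | IsPrim k H x}

noncomputable def Afil : ℕ → Submodule k H
  | 0 => Submodule.span k {(1 : H)}
  | n + 1 => Afil n ⊔ Afil n * Pprim k H

variable {k H}

lemma Afil_le_succ (n : ℕ) : Afil k H n ≤ Afil k H (n + 1) := le_sup_left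

lemma Afil_mono : Monotone (Afil k H) := monotone_nat_of_le_succ Afil_le_succ

lemma one_mem_Afil (n : ℕ) : (1 : H) ∈ Afil k H n :=
  Afil_mono (Nat.zero_le n) (mem_span_singleton_self 1)

lemma Afil_mul (m n : ℕ) : Afil k H m * Afil k H n ≤ Afil k H (m + n) := by
  induction n with
  | zero =>
    rw [mul_le]
    intro a ha s hs
    obtain ⟨α, rfl⟩ := mem_span_singleton.1 hs
    have : a * (α • (1 : H)) = α • a := by rw [mul_smul_comm, mul_one]
    rw [this]
    exact smul_mem _ _ ha
  | succ n ih =>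
    show Afil k H m * (Afil k H n ⊔ Afil k H n * Pprim k H) ≤ _
    rw [Submodule.mul_sup, ← mul_assoc]
    refine sup_le (ih.trans (Afil_le_succ _)) ?_
    refine le_trans (mul_le_mul' ih le_rfl) ?_
    exact le_sup_right

lemma prim_mem_Afil_one {x : H} (hx : IsPrim k H x) : x ∈ Afil k H 1 := by
  have : (1 : H) * x ∈ Afil k H 0 * Pprim k H :=
    mul_mem_mul (mem_span_singleton_self 1) (subset_span hx)
  rw [one_mul] at this
  exact Submodule.mem_sup_right this

/-- the union of the filtration as a subalgebra -/
noncomputable def AfilUnion : Subalgebra k H where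
  carrier := {x : H | ∃ n, x ∈ Afil k H n}
  mul_mem' := by
    rintro a b ⟨m, hm⟩ ⟨n, hn⟩
    exact ⟨m + n, Afil_mul m n (mul_mem_mul hm hn)⟩
  add_mem' := by
    rintro a b ⟨m, hm⟩ ⟨n, hn⟩
    exact ⟨m + n, add_mem (Afil_mono (Nat.le_add_right m n) hm)
      (Afil_mono (Nat.le_add_left n m) hn)⟩
  one_mem' := ⟨0, mem_span_singleton_self 1⟩
  zero_mem' := ⟨0, zero_mem _⟩
  algebraMap_mem' := by
    intro r
    refine ⟨0, ?_⟩
    rw [Algebra.algebraMap_eq_smul_one]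
    exact smul_mem _ _ (mem_span_singleton_self 1)

lemma exists_Afil (hgen : Algebra.adjoin k {x : H | IsPrim k H x} = ⊤) (x : H) :
    ∃ n, x ∈ Afil k H n := by
  have h1 : Algebra.adjoin k {x : H | IsPrim k H x} ≤ AfilUnion := by
    rw [Algebra.adjoin_le_iff]
    intro y hy
    exact ⟨1, prim_mem_Afil_one hy⟩
  rw [hgen] at h1
  exact h1 (Algebra.mem_top (R := k) (A := H))

variable (k H) in
/-- the reduced coproduct against the right unit -/
noncomputable def phiH : H →ₗ[k] H ⊗[k] H :=
  (cop k H).toLinearMap - (TensorProduct.mk k H H).flip 1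

lemma phiH_apply (c : H) : phiH k H c = cop k H c - c ⊗ₜ[k] 1 := rfl

lemma phiH_A0 {c : H} (hc : c ∈ Afil k H 0) : phiH k H c = 0 := by
  obtain ⟨α, rfl⟩ := mem_span_singleton.1 hc
  rw [map_smul, phiH_apply, map_one]
  simp [Algebra.TensorProduct.one_def]

lemma phiH_mul_prim (a p : H) (hp : IsPrim k H p) :
    phiH k H (a * p) =
      phiH k H a * (p ⊗ₜ[k] 1) + phiH k H a * ((1 : H) ⊗ₜ[k] p) + a ⊗ₜ[k] p := by
  simp only [phiH_apply]
  rw [map_mul, hp]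
  simp only [mul_add, sub_mul, Algebra.TensorProduct.tmul_mul_tmul, one_mul, mul_one]
  abel

lemma legL_mul_one_tmul {Q : Submodule k H} {t : H ⊗[k] H} (ht : t ∈ legL Q) (p : H) :
    t * ((1 : H) ⊗ₜ[k] p) ∈ legL Q := by
  induction ht using Submodule.span_induction with
  | mem x hx =>
    obtain ⟨q, hq, y, rfl⟩ := hx
    rw [Algebra.TensorProduct.tmul_mul_tmul, mul_one]
    exact subset_span ⟨q, hq, y * p, rfl⟩
  | zero => rw [zero_mul]; exact zero_mem _
  | add x y _ _ hx hy => rw [add_mul]; exact add_mem hx hy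
  | smul α x _ hx => rw [smul_mul_assoc]; exact smul_mem _ _ hx

lemma legL_mul_tmul_one {Q : Submodule k H} {t : H ⊗[k] H} (ht : t ∈ legL Q) (p : H) :
    t * (p ⊗ₜ[k] (1 : H)) ∈ legL (Q * Submodule.span k {p}) := by
  induction ht using Submodule.span_induction with
  | mem x hx =>
    obtain ⟨q, hq, y, rfl⟩ := hx
    rw [Algebra.TensorProduct.tmul_mul_tmul, mul_one]
    exact subset_span ⟨q * p, mul_mem_mul hq (mem_span_singleton_self p), y, rfl⟩
  | zero => rw [zero_mul]; exact zero_mem _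
  | add x y _ _ hx hy => rw [add_mul]; exact add_mem hx hy
  | smul α x _ hx => rw [smul_mul_assoc]; exact smul_mem _ _ hx

lemma Kstep_prod (m : ℕ) (Q : Submodule k H)
    (hmul : Q * Pprim k H ≤ Afil k H m)
    (hQ : ∀ a ∈ Afil k H m, phiH k H a ∈ legL Q) (hle : Q ≤ Afil k H m)
    (x : H) (hx : x ∈ Afil k H m) :
    ∀ p ∈ Pprim k H, phiH k H (x * p) ∈ legL (Afil k H m) := by
  intro p hpP
  induction hpP using Submodule.span_induction with
  | mem p hp =>
    rw [phiH_mul_prim x p hp]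
    refine add_mem (add_mem ?_ ?_) ?_
    · refine legL_mono ?_ (legL_mul_tmul_one (hQ x hx) p)
      refine le_trans ?_ hmul
      exact mul_le_mul' le_rfl
        ((Submodule.span_singleton_le_iff_mem _ _).2 (subset_span hp))
    · exact legL_mono hle (legL_mul_one_tmul (hQ x hx) p)
    · exact subset_span ⟨x, hx, p, rfl⟩
  | zero => rw [mul_zero, map_zero]; exact zero_mem _
  | add u v _ _ hu hv => rw [mul_add, map_add]; exact add_mem hu hv
  | smul α u _ hu => rw [mul_smul_comm, map_smul]; exact smul_mem _ _ hu

lemma Kstep (m : ℕ) (Q : Submodule k H) (hle : Q ≤ Afil k H m)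
    (hmul : Q * Pprim k H ≤ Afil k H m)
    (hQ : ∀ a ∈ Afil k H m, phiH k H a ∈ legL Q) :
    ∀ c ∈ Afil k H (m + 1), phiH k H c ∈ legL (Afil k H m) := by
  intro c hc
  have hc' : c ∈ Afil k H m ⊔ Afil k H m * Pprim k H := hc
  obtain ⟨a, ha, b, hb, rfl⟩ := Submodule.mem_sup.1 hc'
  rw [map_add]
  refine add_mem (legL_mono hle (hQ a ha)) ?_
  exact Submodule.mul_induction_on hb
    (fun x hx p hpP => Kstep_prod m Q hmul hQ hle x hx p hpP)
    (fun u v hu hv => by rw [map_add]; exact add_mem hu hv)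

lemma Kmain : ∀ n : ℕ, ∀ c ∈ Afil k H (n + 1), phiH k H c ∈ legL (Afil k H n) := by
  intro n
  induction n with
  | zero =>
    refine Kstep 0 ⊥ bot_le (by rw [Submodule.bot_mul]; exact bot_le) ?_
    intro a ha
    rw [phiH_A0 ha]
    exact zero_mem _
  | succ n ih =>
    exact Kstep (n + 1) (Afil k H n) (Afil_le_succ n) le_sup_right ih

end AuxFil

/-- If a Hopf algebra `H` over a field is generated as an algebra by its
primitive elements, then every (right) coideal subalgebra `H'` of `H` is a Hopf
subalgebra: `Δ(H') ⊆ H' ⊗ H'` and `H'` is closed under the antipode `S`. -/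
theorem coideal_subalgebra_of_primitively_generated_is_Hopf
    {k H : Type*} [Field k] [Ring H] [HopfAlgebra k H]
    (hgen : Algebra.adjoin k {x : H | IsPrim k H x} = ⊤)
    (C : Subalgebra k H)
    (hcoideal : ∀ c ∈ C, cop k H c ∈ setSub2 k H (C : Set H)) :
    (∀ c ∈ C, cop k H c ∈ setSub22 k H (C : Set H)) ∧
    (∀ c ∈ C, HopfAlgebra.antipode (R := k) c ∈ C) := by
  classical
  open LinearMap Submodule HopfAlgebra in
  -- the subalgebra as a submodule
  set C' : Submodule k H := Subalgebra.toSubmodule C with hC'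
  have hsetL : setSub2 k H (C : Set H) = legL C' := by
    unfold setSub2 legL
    congr 1
  -- cocommutativity
  have hco : ∀ x : H, copOp k H x = cop k H x := by
    have hle : Algebra.adjoin k {x : H | IsPrim k H x} ≤
        AlgHom.equalizer (copOp k H) (cop k H) := by
      rw [Algebra.adjoin_le_iff]
      intro x hx
      show copOp k H x = cop k H x
      show (flip2 k H) (cop k H x) = cop k H x
      rw [hx, map_add]
      show (Algebra.TensorProduct.comm k H H) _ + (Algebra.TensorProduct.comm k H H) _ = _
      rw [Algebra.TensorProduct.comm_tmul, Algebra.TensorProduct.comm_tmul, add_comm]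
    rw [hgen] at hle
    intro x
    exact hle (Algebra.mem_top (R := k)) 
  have hflip : ∀ {Q : Submodule k H} {t : H ⊗[k] H}, t ∈ legL Q → (flip2 k H) t ∈ legR Q := by
    intro Q t ht
    induction ht using Submodule.span_induction with
    | mem x hx =>
      obtain ⟨p, hp, y, rfl⟩ := hx
      show (Algebra.TensorProduct.comm k H H) _ ∈ _
      rw [Algebra.TensorProduct.comm_tmul]
      exact Submodule.subset_span ⟨y, p, hp, rfl⟩
    | zero => rw [map_zero]; exact zero_mem _
    | add x y _ _ hx hy => rw [map_add]; exact add_mem hx hy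
    | smul α x _ hx => rw [map_smul]; exact Submodule.smul_mem _ _ hx
  have hL : ∀ c ∈ C, cop k H c ∈ legL C' := by
    intro c hc
    have := hcoideal c hc
    rwa [hsetL] at this
  have hR : ∀ c ∈ C, cop k H c ∈ legR C' := by
    intro c hc
    have h2 : copOp k H c ∈ legR C' := hflip (hL c hc)
    rwa [hco c] at h2
  have hspan22 : setSub22 k H (C : Set H) =
      Submodule.span k {t : H ⊗[k] H | ∃ p ∈ (C' : Set H), ∃ q ∈ (C' : Set H), t = p ⊗ₜ[k] q} := by
    unfold setSub22
    congr 1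
  have part1 : ∀ c ∈ C, cop k H c ∈ setSub22 k H (C : Set H) := by
    intro c hc
    rw [hspan22]
    exact legL_inf_legR C' C' ⟨hL c hc, hR c hc⟩
  refine ⟨part1, ?_⟩
  -- the antipode part
  set θ : H ⊗[k] H →ₗ[k] H :=
    (LinearMap.mul' k H).comp ((HopfAlgebra.antipode (R := k)).rTensor H) with hθ
  have hθtmul : ∀ x y : H, θ (x ⊗ₜ[k] y) = HopfAlgebra.antipode (R := k) x * y := by
    intro x y
    simp [hθ]
  have hθcop : ∀ c : H, θ (cop k H c) = algebraMap k H (Coalgebra.counit (R := k) c) := by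
    intro c
    have := HopfAlgebra.mul_antipode_rTensor_comul_apply (R := k) (A := H) c
    simpa [hθ, cop, Bialgebra.comulAlgHom_apply] using this
  have hS1 : HopfAlgebra.antipode (R := k) (1 : H) = 1 := by
    have h := hθcop 1
    rw [map_one] at h
    rw [show ((1 : H ⊗[k] H)) = (1 : H) ⊗ₜ[k] (1 : H) from rfl, hθtmul, mul_one] at h
    simpa using h
  have main : ∀ n : ℕ, ∀ c ∈ C, c ∈ Afil k H n → HopfAlgebra.antipode (R := k) c ∈ C := by
    intro n
    induction n with
    | zero =>
      intro c hc hc0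
      obtain ⟨α, rfl⟩ := Submodule.mem_span_singleton.1 hc0
      rw [map_smul, hS1]
      exact hc
    | succ n ih =>
      intro c hc hcA
      have hr1 : phiH k H c ∈ legL (Afil k H n) := Kmain n c hcA
      have hr2 : phiH k H c ∈ legL C' := by
        rw [phiH_apply]
        exact sub_mem (hL c hc) (Submodule.subset_span ⟨c, hc, 1, rfl⟩)
      have hr3 : phiH k H c ∈ legR C' := by
        rw [phiH_apply]
        exact sub_mem (hR c hc) (Submodule.subset_span ⟨c, 1, C.one_mem, rfl⟩)
      have hr4 : phiH k H c ∈ legL (Afil k H n ⊓ C') :=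
        legL_inf_legL _ _ ⟨hr1, hr2⟩
      have hr5 := legL_inf_legR (Afil k H n ⊓ C') C' ⟨hr4, hr3⟩
      have hθgen : ∀ t ∈ Submodule.span k
          {t : H ⊗[k] H | ∃ p ∈ ((Afil k H n ⊓ C' : Submodule k H) : Set H),
            ∃ q ∈ (C' : Set H), t = p ⊗ₜ[k] q}, θ t ∈ C := by
        intro t ht
        induction ht using Submodule.span_induction with
        | mem t htm =>
          obtain ⟨p, hp, q, hq, rfl⟩ := htm
          rw [hθtmul]
          exact C.mul_mem (ih p hp.2 hp.1) hq
        | zero => rw [map_zero]; exact C.zero_mem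
        | add x y _ _ hx hy => rw [map_add]; exact C.add_mem hx hy
        | smul α x _ hx => rw [map_smul]; exact C.smul_mem hx α
      have hθr : θ (phiH k H c) ∈ C := hθgen _ hr5
      have hkey : θ (phiH k H c) + HopfAlgebra.antipode (R := k) c =
          algebraMap k H (Coalgebra.counit (R := k) c) := by
        rw [← hθcop c]
        have : cop k H c = phiH k H c + c ⊗ₜ[k] (1 : H) := by
          rw [phiH_apply, sub_add_cancel]
        rw [this, map_add, hθtmul, mul_one]
      have : HopfAlgebra.antipode (R := k) c =
          algebraMap k H (Coalgebra.counit (R := k) c) - θ (phiH k H c) :=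
        eq_sub_of_add_eq' hkey
      rw [this]
      exact C.sub_mem (C.algebraMap_mem _) hθr
  intro c hc
  obtain ⟨n, hn⟩ := exists_Afil hgen c
  exact main n c hc hn
end

section
/- Let (A, B, ψ, J, K) be a cylindrical bialgebra. Then K satisfies the generalized reflection equation R^{ψψ}_{21} · (1 ⊗ K) · R^ψ · (K ⊗ 1) = (K ⊗ 1) · R^ψ_{21} · (1 ⊗ K) · R in A ⊗ A, where R^ψ = (ψ⊗id)(R), R^{ψψ} = (ψ⊗ψ)(R), and the subscript 21 denotes the flip of tensor factors. -/
open TensorProduct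

section QSP
variable (k A : Type*) [CommSemiring k] [Semiring A] [Bialgebra k A]

/-- A twist pair `(ψ, J)`: `J` is a Drinfeld twist and `A^{cop,ψ} = A_J` as
quasitriangular bialgebras. -/
structure TwistPair (R : A ⊗[k] A) (ψ : A ≃ₐ[k] A) (J Jinv : A ⊗[k] A) : Prop where
  mul_inv : J * Jinv = 1
  inv_mul : Jinv * J = 1
  cocycle : emb12 k A J * copL k A J = emb23 k A J * copR k A J
  counit_left : couL k A J = 1
  counit_right : couR k A J = 1
  compat_coproduct : ∀ x : A, psiBoth k A ψ (copOp k A (ψ.symm x)) = J * cop k A x * Jinv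
  compat_R : psiBoth k A ψ (flip2 k A R) = flip2 k A J * R * Jinv

/-- A cylindrical bialgebra `(A, B, ψ, J, K)`. -/
structure Cylindrical (R : A ⊗[k] A) (B : Subalgebra k A) (ψ : A ≃ₐ[k] A)
    (J Jinv : A ⊗[k] A) (K : A) : Prop where
  qt : QTriangular k A R
  coideal : ∀ b ∈ B, cop k A b ∈ sub2 k A B
  twist : TwistPair k A R ψ J Jinv
  isUnitK : IsUnit K
  intertwine : ∀ b ∈ B, K * b = ψ b * K
  coproduct : cop k A K = Jinv * ((1 : A) ⊗ₜ[k] K) * psiL k A ψ R * (K ⊗ₜ[k] (1 : A))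

/-- A reflection bialgebra `(A, B, ψ, J, 𝕂)`, the universal tensor K-matrix `𝕂` being
an element of `B ⊗ A ⊆ A ⊗ A`. -/
structure Reflection (R : A ⊗[k] A) (B : Subalgebra k A) (ψ : A ≃ₐ[k] A)
    (J Jinv : A ⊗[k] A) (TK : A ⊗[k] A) : Prop where
  qt : QTriangular k A R
  coideal : ∀ b ∈ B, cop k A b ∈ sub2 k A B
  twist : TwistPair k A R ψ J Jinv
  support : TK ∈ sub2 k A B
  isUnitTK : IsUnit TK
  intertwine : ∀ b ∈ B, TK * cop k A b = psiR k A ψ (cop k A b) * TK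
  coproduct_left : copL k A TK =
    emb23 k A (flip2 k A (psiL k A ψ R)) * emb13 k A TK * emb23 k A R
  coproduct_right : copR k A TK =
    emb23 k A Jinv * emb13 k A TK * emb23 k A (psiL k A ψ R) * emb12 k A TK

end QSP

/-- In a cylindrical bialgebra `(A, B, ψ, J, K)` the basic K-matrix `K`
satisfies the generalized reflection equation
`R^{ψψ}₂₁ · (1 ⊗ K) · R^ψ · (K ⊗ 1) = (K ⊗ 1) · R^ψ₂₁ · (1 ⊗ K) · R` in `A ⊗ A`. -/
theorem cylindrical_generalized_reflection_equation
    {k A : Type*} [Field k] [Ring A] [Bialgebra k A]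
    (R : A ⊗[k] A) (B : Subalgebra k A) (ψ : A ≃ₐ[k] A) (J Jinv : A ⊗[k] A) (K : A)
    (hcyl : Cylindrical k A R B ψ J Jinv K) :
    flip2 k A (psiBoth k A ψ R) * ((1 : A) ⊗ₜ[k] K) * psiL k A ψ R * (K ⊗ₜ[k] (1 : A)) =
      (K ⊗ₜ[k] (1 : A)) * flip2 k A (psiL k A ψ R) * ((1 : A) ⊗ₜ[k] K) * R := by
  have hflipcomm : ∀ x : A ⊗[k] A,
      flip2 k A (psiBoth k A ψ x) = psiBoth k A ψ (flip2 k A x) := by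
    intro x
    induction x using TensorProduct.induction_on with
    | zero => simp
    | tmul a b => simp [flip2, psiBoth]
    | add u v hu hv => simp [map_add, hu, hv]
  have hint := hcyl.qt.intertwine K
  rw [hcyl.coproduct] at hint
  have hcopop : copOp k A K =
      flip2 k A Jinv * (K ⊗ₜ[k] (1 : A)) * flip2 k A (psiL k A ψ R) *
        ((1 : A) ⊗ₜ[k] K) := by
    show (flip2 k A) ((cop k A) K) = _
    rw [hcyl.coproduct]
    simp [map_mul, flip2, Algebra.TensorProduct.comm_tmul]
  rw [hcopop] at hint
  have hJ : flip2 k A J * flip2 k A Jinv = 1 := by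
    rw [← map_mul, hcyl.twist.mul_inv, map_one]
  have hR : flip2 k A (psiBoth k A ψ R) = flip2 k A J * R * Jinv := by
    rw [hflipcomm, hcyl.twist.compat_R]
  calc flip2 k A (psiBoth k A ψ R) * ((1 : A) ⊗ₜ[k] K) * psiL k A ψ R * (K ⊗ₜ[k] (1 : A))
      = flip2 k A J *
        (R * (Jinv * ((1 : A) ⊗ₜ[k] K) * psiL k A ψ R * (K ⊗ₜ[k] (1 : A)))) := by
        rw [hR]; simp only [mul_assoc]
    _ = flip2 k A J *
        (flip2 k A Jinv * (K ⊗ₜ[k] (1 : A)) * flip2 k A (psiL k A ψ R) *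
          ((1 : A) ⊗ₜ[k] K) * R) := by rw [hint]
    _ = (flip2 k A J * flip2 k A Jinv) *
        ((K ⊗ₜ[k] (1 : A)) * flip2 k A (psiL k A ψ R) * ((1 : A) ⊗ₜ[k] K) * R) := by
        simp only [mul_assoc]
    _ = (K ⊗ₜ[k] (1 : A)) * flip2 k A (psiL k A ψ R) * ((1 : A) ⊗ₜ[k] K) * R := by
        rw [hJ, one_mul]
end

section
/- Let (A, B, ψ, J, 𝕂) be a reflection bialgebra. Then 𝕂 satisfies the generalized reflection equation R^{ψψ}_{32} · 𝕂_{13} · R^ψ_{23} · 𝕂_{12} = 𝕂_{12} · R^ψ_{32} · 𝕂_{13} · R_{23} in B ⊗ A ⊗ A. -/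
open TensorProduct

section Aux
variable {k A : Type*} [Field k] [Ring A] [Bialgebra k A]

/-- `ψ` applied to the middle tensor factor. -/
noncomputable def Psi2 (ψ : A ≃ₐ[k] A) : A ⊗[k] (A ⊗[k] A) →ₐ[k] A ⊗[k] (A ⊗[k] A) :=
  Algebra.TensorProduct.map (AlgHom.id k A) (psiL k A ψ)

lemma Psi2_emb12 (ψ : A ≃ₐ[k] A) (t : A ⊗[k] A) :
    Psi2 ψ (emb12 k A t) = emb12 k A (psiR k A ψ t) := by
  induction t using TensorProduct.induction_on with
  | zero => simp
  | tmul a b => simp [Psi2, emb12, psiR, psiL]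
  | add x y hx hy => simp only [map_add, hx, hy]

lemma Psi2_emb13 (ψ : A ≃ₐ[k] A) (t : A ⊗[k] A) :
    Psi2 ψ (emb13 k A t) = emb13 k A t := by
  induction t using TensorProduct.induction_on with
  | zero => simp
  | tmul a b => simp [Psi2, emb13, psiL]
  | add x y hx hy => simp only [map_add, hx, hy]

lemma Psi2_emb23 (ψ : A ≃ₐ[k] A) (t : A ⊗[k] A) :
    Psi2 ψ (emb23 k A t) = emb23 k A (psiL k A ψ t) := by
  induction t using TensorProduct.induction_on with
  | zero => simp
  | tmul a b => simp [Psi2, emb23, psiL]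
  | add x y hx hy => simp only [map_add, hx, hy]

lemma psiL_flip_psiL (ψ : A ≃ₐ[k] A) (t : A ⊗[k] A) :
    psiL k A ψ (flip2 k A (psiL k A ψ t)) = flip2 k A (psiBoth k A ψ t) := by
  induction t using TensorProduct.induction_on with
  | zero => simp
  | tmul a b => simp [psiL, psiBoth, flip2]
  | add x y hx hy => simp only [map_add, hx, hy]

lemma assoc_tmul_eq (s : A ⊗[k] A) (y : A) :
    (Algebra.TensorProduct.assoc k k k A A A) (s ⊗ₜ[k] y) =
      emb12 k A s * ((1 : A) ⊗ₜ[k] ((1 : A) ⊗ₜ[k] y)) := by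
  induction s using TensorProduct.induction_on with
  | zero => simp
  | tmul a b =>
      simp [emb12, Algebra.TensorProduct.tmul_mul_tmul]
  | add x z hx hz =>
      simp only [TensorProduct.add_tmul, map_add, add_mul, hx, hz]

lemma emb12_central (s : A ⊗[k] A) (y : A) :
    emb12 k A s * ((1 : A) ⊗ₜ[k] ((1 : A) ⊗ₜ[k] y)) =
      ((1 : A) ⊗ₜ[k] ((1 : A) ⊗ₜ[k] y)) * emb12 k A s := by
  induction s using TensorProduct.induction_on with
  | zero => simp
  | tmul a b => simp [emb12, Algebra.TensorProduct.tmul_mul_tmul]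
  | add x z hx hz => simp only [map_add, add_mul, mul_add, hx, hz]

lemma copL_tmul (x y : A) :
    copL k A (x ⊗ₜ[k] y) =
      emb12 k A (cop k A x) * ((1 : A) ⊗ₜ[k] ((1 : A) ⊗ₜ[k] y)) := by
  rw [← assoc_tmul_eq]
  simp [copL]

lemma key_intertwine (R : A ⊗[k] A) (B : Subalgebra k A) (ψ : A ≃ₐ[k] A)
    (J Jinv TK : A ⊗[k] A) (hrefl : Reflection k A R B ψ J Jinv TK)
    (t : A ⊗[k] A) (ht : t ∈ sub2 k A B) :
    emb12 k A TK * copL k A t = Psi2 ψ (copL k A t) * emb12 k A TK := by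
  induction ht using Submodule.span_induction with
  | mem t hmem =>
      obtain ⟨x, hx, y, rfl⟩ := hmem
      have hPsi2e : Psi2 ψ ((1 : A) ⊗ₜ[k] ((1 : A) ⊗ₜ[k] y)) =
          (1 : A) ⊗ₜ[k] ((1 : A) ⊗ₜ[k] y) := by
        simp [Psi2, psiL]
      calc emb12 k A TK * copL k A (x ⊗ₜ[k] y)
          = emb12 k A (TK * cop k A x) * ((1 : A) ⊗ₜ[k] ((1 : A) ⊗ₜ[k] y)) := by
            rw [copL_tmul, ← mul_assoc, ← map_mul]
        _ = emb12 k A (psiR k A ψ (cop k A x)) *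
              (emb12 k A TK * ((1 : A) ⊗ₜ[k] ((1 : A) ⊗ₜ[k] y))) := by
            rw [hrefl.intertwine x hx, map_mul, mul_assoc]
        _ = emb12 k A (psiR k A ψ (cop k A x)) *
              ((1 : A) ⊗ₜ[k] ((1 : A) ⊗ₜ[k] y)) * emb12 k A TK := by
            rw [emb12_central, mul_assoc]
        _ = Psi2 ψ (copL k A (x ⊗ₜ[k] y)) * emb12 k A TK := by
            rw [copL_tmul, map_mul, Psi2_emb12, hPsi2e]
  | zero => simp
  | add a b _ _ ha hb => simp only [map_add, mul_add, add_mul, ha, hb]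
  | smul c a _ ha =>
      simp only [map_smul, smul_mul_assoc, mul_smul_comm, ha]

end Aux

/-- In a reflection bialgebra `(A, B, ψ, J, 𝕂)` the universal tensor
K-matrix `𝕂` satisfies the generalized reflection equation
`R^{ψψ}₃₂ · 𝕂₁₃ · R^ψ₂₃ · 𝕂₁₂ = 𝕂₁₂ · R^ψ₃₂ · 𝕂₁₃ · R₂₃` in `B ⊗ A ⊗ A ⊆ A^{⊗3}`. -/
theorem reflection_generalized_reflection_equation
    {k A : Type*} [Field k] [Ring A] [Bialgebra k A]
    (R : A ⊗[k] A) (B : Subalgebra k A) (ψ : A ≃ₐ[k] A) (J Jinv TK : A ⊗[k] A)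
    (hrefl : Reflection k A R B ψ J Jinv TK) :
    emb23 k A (flip2 k A (psiBoth k A ψ R)) * emb13 k A TK *
        emb23 k A (psiL k A ψ R) * emb12 k A TK =
      emb12 k A TK * emb23 k A (flip2 k A (psiL k A ψ R)) *
        emb13 k A TK * emb23 k A R := by
  have h := key_intertwine R B ψ J Jinv TK hrefl TK hrefl.support
  rw [hrefl.coproduct_left, map_mul, map_mul, Psi2_emb23, Psi2_emb13, Psi2_emb23,
    psiL_flip_psiL] at h
  simpa only [mul_assoc] using h.symm
end

section
/- Let (A, B, ψ, J, 𝕂) be a reflection bialgebra and set K = (ε⊗id)(𝕂) ∈ A. Then (A, B, ψ, J, K) is a cylindrical bialgebra, i.e. K is invertible, K·b = ψ(b)·K for all b ∈ B, and Δ(K) = J^{-1}·(1⊗K)·R^ψ·(K⊗1). Moreover the factorization 𝕂 = R^ψ_{21}·(1⊗K)·R holds in A ⊗ A. -/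
open TensorProduct

section Aux

/-- The map `ε ⊗ id ⊗ id : A ⊗ (A ⊗ A) → A ⊗ A`. -/
noncomputable def Hout (k A : Type*) [CommSemiring k] [Semiring A] [Bialgebra k A] :
    A ⊗[k] (A ⊗[k] A) →ₐ[k] A ⊗[k] A :=
  (Algebra.TensorProduct.lid k (A ⊗[k] A)).toAlgHom.comp
    (Algebra.TensorProduct.map (cou k A) (AlgHom.id k (A ⊗[k] A)))

variable {k A : Type*} [CommSemiring k] [Semiring A] [Bialgebra k A]

lemma couL_tmul (a b : A) :
    couL k A (a ⊗ₜ[k] b) = Coalgebra.counit (R := k) a • b := by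
  simp [couL, cou]

lemma Hout_tmul (a : A) (t : A ⊗[k] A) :
    Hout k A (a ⊗ₜ[k] t) = Coalgebra.counit (R := k) a • t := by
  simp [Hout, cou]

lemma couL_cop (a : A) : couL k A (cop k A a) = a := by
  have h1 : couL k A (cop k A a)
      = TensorProduct.lid k A (LinearMap.rTensor A (Coalgebra.counit (R := k)) (cop k A a)) := by
    generalize cop k A a = x
    induction x using TensorProduct.induction_on with
    | zero => simp
    | tmul a b => simp [couL_tmul]
    | add u v hu hv => simp only [map_add, hu, hv]
  rw [h1]
  have h2 : cop k A a = Coalgebra.comul (R := k) a := rfl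
  rw [h2, Coalgebra.rTensor_counit_comul]
  simp

lemma Hout_emb23 (x : A ⊗[k] A) : Hout k A (emb23 k A x) = x := by
  have : emb23 k A x = 1 ⊗ₜ[k] x := rfl
  rw [this, Hout_tmul]; simp

lemma Hout_emb13 (t : A ⊗[k] A) :
    Hout k A (emb13 k A t) = (1 : A) ⊗ₜ[k] couL k A t := by
  induction t using TensorProduct.induction_on with
  | zero => simp [map_zero]
  | tmul a b =>
    have : emb13 k A (a ⊗ₜ[k] b) = a ⊗ₜ[k] ((1 : A) ⊗ₜ[k] b) := rfl
    rw [this, Hout_tmul, couL_tmul, TensorProduct.tmul_smul]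
  | add u v hu hv =>
    simp only [map_add, hu, hv, TensorProduct.tmul_add]

lemma Hout_emb12 (t : A ⊗[k] A) :
    Hout k A (emb12 k A t) = couL k A t ⊗ₜ[k] (1 : A) := by
  induction t using TensorProduct.induction_on with
  | zero => simp [map_zero]
  | tmul a b =>
    have : emb12 k A (a ⊗ₜ[k] b) = a ⊗ₜ[k] (b ⊗ₜ[k] (1 : A)) := rfl
    rw [this, Hout_tmul, couL_tmul, TensorProduct.smul_tmul']
  | add u v hu hv =>
    simp only [map_add, hu, hv, TensorProduct.add_tmul]

lemma Hout_copR (t : A ⊗[k] A) :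
    Hout k A (copR k A t) = cop k A (couL k A t) := by
  induction t using TensorProduct.induction_on with
  | zero => simp [map_zero]
  | tmul a b =>
    have : copR k A (a ⊗ₜ[k] b) = a ⊗ₜ[k] (cop k A b) := rfl
    rw [this, Hout_tmul, couL_tmul, map_smul]
  | add u v hu hv => simp only [map_add, hu, hv]

lemma Hout_assoc (x : A ⊗[k] A) (b : A) :
    Hout k A ((Algebra.TensorProduct.assoc k k k A A A) (x ⊗ₜ[k] b))
      = couL k A x ⊗ₜ[k] b := by
  induction x using TensorProduct.induction_on with
  | zero => simp [TensorProduct.zero_tmul]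
  | tmul u v =>
    have : (Algebra.TensorProduct.assoc k k k A A A) ((u ⊗ₜ[k] v) ⊗ₜ[k] b)
        = u ⊗ₜ[k] (v ⊗ₜ[k] b) := rfl
    rw [this, Hout_tmul, couL_tmul, TensorProduct.smul_tmul']
  | add u v hu hv =>
    simp only [TensorProduct.add_tmul, map_add, hu, hv]

lemma Hout_copL (t : A ⊗[k] A) : Hout k A (copL k A t) = t := by
  induction t using TensorProduct.induction_on with
  | zero => simp [map_zero]
  | tmul a b =>
    have : copL k A (a ⊗ₜ[k] b)
        = (Algebra.TensorProduct.assoc k k k A A A) ((cop k A a) ⊗ₜ[k] b) := rfl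
    rw [this, Hout_assoc, couL_cop]
  | add u v hu hv => simp only [map_add, hu, hv]

lemma couL_psiR (ψ : A ≃ₐ[k] A) (t : A ⊗[k] A) :
    couL k A (psiR k A ψ t) = ψ (couL k A t) := by
  induction t using TensorProduct.induction_on with
  | zero => simp [map_zero]
  | tmul a b =>
    have : psiR k A ψ (a ⊗ₜ[k] b) = a ⊗ₜ[k] ψ b := rfl
    rw [this, couL_tmul, couL_tmul, map_smul]
  | add u v hu hv => simp only [map_add, hu, hv]

end Aux

/-- A reflection bialgebra `(A, B, ψ, J, 𝕂)` induces a cylindrical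
bialgebra `(A, B, ψ, J, K)` with `K = (ε ⊗ id)(𝕂)`, and the factorization
`𝕂 = R^ψ₂₁ · (1 ⊗ K) · R` holds. -/
theorem reflection_to_cylindrical
    {k A : Type*} [Field k] [Ring A] [Bialgebra k A]
    (R : A ⊗[k] A) (B : Subalgebra k A) (ψ : A ≃ₐ[k] A) (J Jinv TK : A ⊗[k] A)
    (hrefl : Reflection k A R B ψ J Jinv TK) :
    Cylindrical k A R B ψ J Jinv (couL k A TK) ∧
    TK = flip2 k A (psiL k A ψ R) * ((1 : A) ⊗ₜ[k] (couL k A TK)) * R := by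
  set K := couL k A TK with hK
  have hfact : TK = flip2 k A (psiL k A ψ R) * ((1 : A) ⊗ₜ[k] K) * R := by
    have h := congrArg (Hout k A) hrefl.coproduct_left
    rwa [Hout_copL, map_mul, map_mul, Hout_emb23, Hout_emb13, Hout_emb23] at h
  refine ⟨?_, hfact⟩
  refine ⟨hrefl.qt, hrefl.coideal, hrefl.twist, hrefl.isUnitTK.map (couL k A), ?_, ?_⟩
  · intro b hb
    have h := congrArg (couL k A) (hrefl.intertwine b hb)
    rwa [map_mul, map_mul, couL_cop, couL_psiR, couL_cop] at h
  · have h := congrArg (Hout k A) hrefl.coproduct_right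
    rwa [Hout_copR, map_mul, map_mul, map_mul, Hout_emb23, Hout_emb13, Hout_emb23,
      Hout_emb12] at h
end

section
/- Let Q⁺ be the free commutative monoid on a finite set of generators (simple roots), let A = ⊕_{β ∈ Q⁺} A_β be a Q⁺-graded associative algebra over a field of characteristic 0 with A_0 = k, and let Y = (Y_β)_{β ∈ Q⁺, β ≠ 0} be a family with Y_β ∈ A_β. Let T ⊆ Q⁺ ∖ {0} be a subset with the property: for every λ ∉ T ∪ {0} and every decomposition λ = β₁ + ⋯ + β_k into nonzero elements of Q⁺ with k ≥ 1, at least one β_j lies outside T. Suppose that for every λ ∉ T ∪ {0} we have Σ_{k ≥ 1} (1/k!) Σ_{β₁+⋯+β_k = λ, β_j ≠ 0} Y_{β₁}⋯Y_{β_k} = 0 (a finite sum in A_λ). Then Y_λ = 0 for all λ ∉ T ∪ {0}. -/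
open scoped BigOperators

/-- Height of an element of the free commutative monoid. -/
private def gesHt {ι : Type*} (lam : ι →₀ ℕ) : ℕ := lam.sum fun _ n => n

private lemma gesHt_add {ι : Type*} (a b : ι →₀ ℕ) :
    gesHt (a + b) = gesHt a + gesHt b := by
  unfold gesHt
  exact Finsupp.sum_add_index' (fun _ => rfl) (fun _ _ _ => rfl)

private lemma gesHt_pos {ι : Type*} {a : ι →₀ ℕ} (ha : a ≠ 0) : 0 < gesHt a := by
  by_contra h
  apply ha
  ext i
  have h0 : gesHt a = 0 := Nat.eq_zero_of_not_pos h
  unfold gesHt Finsupp.sum at h0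
  rw [Finset.sum_eq_zero_iff] at h0
  by_cases hi : i ∈ a.support
  · exact h0 i hi
  · simpa using (Finsupp.notMem_support_iff.mp hi)

private lemma gesHt_list_sum {ι : Type*} (l : List (ι →₀ ℕ)) :
    gesHt l.sum = (l.map gesHt).sum := by
  induction l with
  | nil => simp [gesHt]
  | cons a t ih => simp [gesHt_add, ih]

/-- Let `Q⁺ = ι →₀ ℕ` be the free commutative monoid on a finite set
of simple roots, `A = ⊕_{β ∈ Q⁺} A_β` a `Q⁺`-graded algebra over a field of
characteristic `0` with `A_0 = k`, and `Y = (Y_β)_{β ≠ 0}` a family with `Y_β ∈ A_β`.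
Let `T ⊆ Q⁺ \ {0}` be such that every decomposition of any `λ ∉ T ∪ {0}` into nonzero
parts has a part outside `T`.  If for every `λ ∉ T ∪ {0}` the (finite) sum
`Σ_{k ≥ 1} (1/k!) Σ_{β₁+⋯+β_k = λ, β_j ≠ 0} Y_{β₁}⋯Y_{β_k}` vanishes, then `Y_λ = 0`
for all `λ ∉ T ∪ {0}`. -/
theorem graded_exponential_support
    {ι k A : Type*} [Finite ι] [DecidableEq ι] [Field k] [CharZero k]
    [Ring A] [Algebra k A]
    (𝒜 : (ι →₀ ℕ) → Submodule k A)
    (h1 : 𝒜 0 = 1)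
    (hmul : ∀ β γ : ι →₀ ℕ, ∀ x ∈ 𝒜 β, ∀ y ∈ 𝒜 γ, x * y ∈ 𝒜 (β + γ))
    (hinternal : DirectSum.IsInternal 𝒜)
    (Y : (ι →₀ ℕ) → A) (hY : ∀ β : ι →₀ ℕ, β ≠ 0 → Y β ∈ 𝒜 β)
    (T : Set (ι →₀ ℕ)) (h0T : (0 : ι →₀ ℕ) ∉ T)
    (hTdec : ∀ lam : ι →₀ ℕ, lam ∉ T → lam ≠ 0 →
      ∀ l : List (ι →₀ ℕ), l ≠ [] → (∀ β ∈ l, β ≠ 0) → l.sum = lam →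
        ∃ β ∈ l, β ∉ T)
    (hsum : ∀ lam : ι →₀ ℕ, lam ∉ T → lam ≠ 0 →
      (∑ᶠ l ∈ {l : List (ι →₀ ℕ) | l ≠ [] ∧ (∀ β ∈ l, β ≠ 0) ∧ l.sum = lam},
        ((l.length.factorial : k)⁻¹) • (l.map Y).prod) = 0) :
    ∀ lam : ι →₀ ℕ, lam ∉ T → lam ≠ 0 → Y lam = 0 := by
  have main : ∀ n : ℕ, ∀ lam : ι →₀ ℕ, gesHt lam = n → lam ∉ T → lam ≠ 0 → Y lam = 0 := by
    intro n
    induction n using Nat.strong_induction_on with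
    | _ n ih =>
      intro lam hn hT hne
      set f : List (ι →₀ ℕ) → A :=
        fun l => ((l.length.factorial : k)⁻¹) • (l.map Y).prod with hf
      set S : Set (List (ι →₀ ℕ)) :=
        {l : List (ι →₀ ℕ) | l ≠ [] ∧ (∀ β ∈ l, β ≠ 0) ∧ l.sum = lam} with hSdef
      have hzero : ∀ l : List (ι →₀ ℕ), l ≠ [lam] → Set.indicator S f l = 0 := by
        intro l hl
        by_cases hlS : l ∈ S
        · rw [Set.indicator_of_mem hlS]
          obtain ⟨hlne, hlnz, hlsum⟩ := hlS
          -- l has length ≥ 2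
          have hlen2 : 2 ≤ l.length := by
            rcases l with _ | ⟨a, t⟩
            · exact absurd rfl hlne
            · rcases t with _ | ⟨b, t'⟩
              · simp at hlsum
                exact absurd (by rw [hlsum]) hl
              · simp [Nat.succ_le_succ, Nat.succ_le_succ_iff]
          obtain ⟨β, hβl, hβT⟩ := hTdec lam hT hne l hlne hlnz hlsum
          have hβne : β ≠ 0 := hlnz β hβl
          -- height of β is less than n
          have hperm : l.Perm (β :: l.erase β) := List.perm_cons_erase hβl
          have hsums : lam = β + (l.erase β).sum := by
            rw [← hlsum, List.Perm.sum_eq hperm, List.sum_cons]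
          have herase_ne : l.erase β ≠ [] := by
            intro h
            have := List.Perm.length_eq hperm
            rw [h] at this
            simp at this
            omega
          obtain ⟨γ, hγ⟩ := List.exists_mem_of_ne_nil _ herase_ne
          have hγne : γ ≠ 0 := hlnz γ (List.mem_of_mem_erase hγ)
          have hγht : 0 < gesHt γ := gesHt_pos hγne
          have herasesum : 0 < gesHt (l.erase β).sum := by
            rw [gesHt_list_sum]
            have : gesHt γ ∈ (l.erase β).map gesHt := List.mem_map_of_mem hγ
            calc 0 < gesHt γ := hγht
              _ ≤ ((l.erase β).map gesHt).sum := List.single_le_sum (by simp) _ this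
          have hlt : gesHt β < n := by
            rw [← hn, hsums, gesHt_add]
            omega
          have : Y β = 0 := ih _ hlt β rfl hβT hβne
          have hz : (0 : A) ∈ l.map Y := by
            rw [← this]; exact List.mem_map_of_mem hβl
          rw [hf]
          simp [List.prod_eq_zero hz]
        · exact Set.indicator_of_notMem hlS f
      have hmem : [lam] ∈ S := by
        refine ⟨by simp, ?_, by simp⟩
        intro β hβ
        simp at hβ
        rw [hβ]; exact hne
      have := hsum lam hT hne
      rw [finsum_mem_def] at this
      rw [finsum_eq_single _ ([lam]) hzero] at this
      rw [Set.indicator_of_mem hmem] at this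
      simpa [hf] using this
  intro lam hT hne
  exact main (gesHt lam) lam rfl hT hne
end
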